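/- Let c : ℝ^d × ℝ^d → ℝ be continuously differentiable, let ν ∈ P(X), τ > 0, and ψ : X → ℝ bounded measurable. Define φ(x) := −τ log ∫_X exp((ψ(y) − c(x,y))/τ) dν(y) for x ∈ ℝ^d. Then φ is differentiable at every x ∈ ℝ^d, with gradient given by the conditional-expectation formula ∇φ(x) = ( ∫_X ∇_x c(x,y) · exp((ψ(y) − c(x,y))/τ) dν(y) ) / ( ∫_X exp((ψ(y) − c(x,y))/τ) dν(y) ), where ∇_x c denotes the gradient of c with respect to its first argument. -/

import Mathlib

set_option maxHeartbeats 2000000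


open MeasureTheory Real Set

abbrev Pt (d : ℕ) := EuclideanSpace ℝ (Fin d)

/-- for a `C¹` cost `c`, the potential
`φ(x) = -τ log ∫ exp((ψ(y) - c(x,y))/τ) dν(y)` is differentiable everywhere, with gradient
`∇φ(x) = (∫ ∇ₓc(x,y) e^{(ψ(y)-c(x,y))/τ} dν(y)) / (∫ e^{(ψ(y)-c(x,y))/τ} dν(y))`. -/
theorem stmt_2 {d : ℕ} (X : Set (Pt d)) (hXc : IsCompact X) (hXne : X.Nonempty)
    (c : Pt d × Pt d → ℝ) (hc : ContDiff ℝ 1 c)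
    (ν : Measure (Pt d)) [IsProbabilityMeasure ν] (hνX : ν Xᶜ = 0)
    (τ : ℝ) (hτ : 0 < τ)
    (ψ : Pt d → ℝ) (hψm : Measurable ψ) (hψb : ∃ M : ℝ, ∀ y, |ψ y| ≤ M)
    (φ : Pt d → ℝ)
    (hφ : ∀ x, φ x = -τ * Real.log (∫ y, Real.exp ((ψ y - c (x, y)) / τ) ∂ν)) :
    ∀ x : Pt d,
      HasGradientAt φ
        ((∫ y, Real.exp ((ψ y - c (x, y)) / τ) ∂ν)⁻¹ •
          (∫ y, Real.exp ((ψ y - c (x, y)) / τ) • gradient (fun x' => c (x', y)) x ∂ν))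
        x := by
  obtain ⟨M, hM⟩ := hψb
  have hcc : Continuous c := hc.continuous
  have hcd : Differentiable ℝ c := hc.differentiable one_ne_zero
  have hcf : Continuous (fderiv ℝ c) := hc.continuous_fderiv one_ne_zero
  have haeX : ∀ᵐ y ∂ν, y ∈ X := mem_ae_iff.2 hνX
  intro x
  -- notation
  set g : Pt d → Pt d → ℝ := fun x' y => Real.exp ((ψ y - c (x', y)) / τ) with hgdef
  set F : Pt d → ℝ := fun x' => ∫ y, g x' y ∂ν with hFdef
  -- partial fderiv
  set J : Pt d →L[ℝ] Pt d × Pt d := (ContinuousLinearMap.id ℝ (Pt d)).prod 0 with hJdef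
  set L : Pt d → Pt d → (Pt d →L[ℝ] ℝ) := fun x' y => (fderiv ℝ c (x', y)).comp J with hLdef
  have hLd : ∀ (x' y : Pt d), HasFDerivAt (fun z => c (z, y)) (L x' y) x' := by
    intro x' y
    exact (hcd (x', y)).hasFDerivAt.comp x'
      ((hasFDerivAt_id x').prodMk (hasFDerivAt_const y x'))
  have hLnorm : ∀ x' y, ‖L x' y‖ ≤ ‖fderiv ℝ c (x', y)‖ := by
    intro x' y
    refine ContinuousLinearMap.opNorm_le_bound _ (norm_nonneg _) fun v => ?_
    have : ‖J v‖ = ‖v‖ := by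
      simp [hJdef, Prod.norm_def]
    calc ‖(fderiv ℝ c (x', y)) (J v)‖ ≤ ‖fderiv ℝ c (x', y)‖ * ‖J v‖ :=
          ContinuousLinearMap.le_opNorm _ _
      _ = ‖fderiv ℝ c (x', y)‖ * ‖v‖ := by rw [this]
  -- bounds on compact set
  have hK : IsCompact ((Metric.closedBall x 1) ×ˢ X) := (isCompact_closedBall x 1).prod hXc
  obtain ⟨C, hC⟩ := hK.exists_bound_of_continuousOn hcc.continuousOn
  obtain ⟨D, hD⟩ := hK.exists_bound_of_continuousOn hcf.continuousOn
  have hC0 : 0 ≤ C := by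
    obtain ⟨y0, hy0⟩ := hXne
    exact (norm_nonneg _).trans (hC (x, y0) ⟨Metric.mem_closedBall_self zero_le_one, hy0⟩)
  have hD0 : 0 ≤ D := by
    obtain ⟨y0, hy0⟩ := hXne
    exact (norm_nonneg _).trans (hD (x, y0) ⟨Metric.mem_closedBall_self zero_le_one, hy0⟩)
  -- pointwise bound on g
  have hgb : ∀ x' ∈ Metric.closedBall x 1, ∀ y ∈ X, g x' y ≤ Real.exp ((M + C) / τ) := by
    intro x' hx' y hy
    refine Real.exp_le_exp.2 ((div_le_div_iff_of_pos_right hτ).2 ?_)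
    have h1 : ψ y ≤ M := (abs_le.1 (hM y)).2
    have h2 : -C ≤ c (x', y) := by
      have := hC (x', y) ⟨hx', hy⟩
      rw [Real.norm_eq_abs] at this
      linarith [(abs_le.1 this).1]
    linarith
  have hg_pos : ∀ x' y, 0 < g x' y := fun x' y => Real.exp_pos _
  -- measurability of g x' for each x'
  have hg_meas : ∀ x', AEStronglyMeasurable (g x') ν := by
    intro x'
    exact ((hψm.sub (hcc.comp (continuous_const.prodMk continuous_id)).measurable).div_const
      τ).exp.aestronglyMeasurable
  -- integrability of g x' for x' in closed ball
  have hg_int : ∀ x' ∈ Metric.closedBall x 1, Integrable (g x') ν := by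
    intro x' hx'
    refine Integrable.mono' (integrable_const (Real.exp ((M + C) / τ))) (hg_meas x') ?_
    filter_upwards [haeX] with y hy
    rw [Real.norm_eq_abs, abs_of_pos (hg_pos x' y)]
    exact hgb x' hx' y hy
  -- the candidate derivative of g in x'
  set g' : Pt d → Pt d → (Pt d →L[ℝ] ℝ) :=
    fun x' y => (-(τ⁻¹ * g x' y)) • L x' y with hg'def
  have hg'd : ∀ x' y, HasFDerivAt (fun z => g z y) (g' x' y) x' := by
    intro x' y
    have h0 : HasFDerivAt (fun z => τ⁻¹ * (ψ y - c (z, y))) (τ⁻¹ • (0 - L x' y)) x' :=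
      ((hasFDerivAt_const (ψ y) x').sub (hLd x' y)).const_mul τ⁻¹
    have h1 : HasFDerivAt (fun z => (ψ y - c (z, y)) / τ) (τ⁻¹ • (0 - L x' y)) x' := by
      simpa [div_eq_inv_mul] using h0
    have := h1.exp
    refine this.congr_fderiv ?_
    ext v
    simp [hg'def, hgdef]
    ring
  -- measurability of g' x
  have hgm : ∀ x', Measurable (g x') := fun x' =>
    ((hψm.sub (hcc.comp (continuous_const.prodMk continuous_id)).measurable).div_const τ).exp
  have hg'_meas : AEStronglyMeasurable (g' x) ν := by
    have hLcont : Continuous (fun y => L x y) := by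
      have h1 : Continuous (fun y => fderiv ℝ c (x, y)) :=
        hcf.comp (continuous_const.prodMk continuous_id)
      simp only [hLdef]
      exact h1.clm_comp continuous_const
    simp only [hg'def]
    exact (((hgm x).const_mul τ⁻¹).neg.aestronglyMeasurable).smul hLcont.aestronglyMeasurable
  -- bound on g'
  have hg'b : ∀ᵐ y ∂ν, ∀ x' ∈ Metric.ball x 1, ‖g' x' y‖ ≤ τ⁻¹ * Real.exp ((M + C) / τ) * D := by
    filter_upwards [haeX] with y hy x' hx'
    have hx'c : x' ∈ Metric.closedBall x 1 := Metric.ball_subset_closedBall hx'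
    have h1 : ‖g' x' y‖ ≤ (τ⁻¹ * g x' y) * ‖L x' y‖ := by
      simp only [hg'def]
      rw [norm_smul, norm_neg, Real.norm_eq_abs, abs_of_pos (by positivity)]
    refine h1.trans ?_
    have h2 : ‖L x' y‖ ≤ D := (hLnorm x' y).trans (hD (x', y) ⟨hx'c, hy⟩)
    have h3 : g x' y ≤ Real.exp ((M + C) / τ) := hgb x' hx'c y hy
    calc (τ⁻¹ * g x' y) * ‖L x' y‖ ≤ (τ⁻¹ * Real.exp ((M + C) / τ)) * D := by
          apply mul_le_mul _ h2 (norm_nonneg _) (by positivity)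
          exact mul_le_mul_of_nonneg_left h3 (by positivity)
      _ = τ⁻¹ * Real.exp ((M + C) / τ) * D := by ring
  -- differentiate under the integral
  have hF : HasFDerivAt F (∫ y, g' x y ∂ν) x := by
    refine hasFDerivAt_integral_of_dominated_of_fderiv_le (F := fun x' y => g x' y)
      (bound := fun _ => τ⁻¹ * Real.exp ((M + C) / τ) * D) (Metric.ball_mem_nhds x zero_lt_one)
      (Filter.Eventually.of_forall fun x' => hg_meas x')
      (hg_int x (Metric.mem_closedBall_self zero_le_one)) hg'_meas hg'b (integrable_const _) ?_
    filter_upwards with y x' _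
    exact hg'd x' y
  -- positivity of F x
  have hFx_pos : 0 < F x := by
    have hCx : Real.exp ((-(M + C)) / τ) ≤ F x := by
      have : ∀ᵐ y ∂ν, Real.exp ((-(M + C)) / τ) ≤ g x y := by
        filter_upwards [haeX] with y hy
        refine Real.exp_le_exp.2 ((div_le_div_iff_of_pos_right hτ).2 ?_)
        have h1 : -M ≤ ψ y := (abs_le.1 (hM y)).1
        have h2 : c (x, y) ≤ C := by
          have := hC (x, y) ⟨Metric.mem_closedBall_self zero_le_one, hy⟩
          rw [Real.norm_eq_abs] at this
          linarith [(abs_le.1 this).2]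
        linarith
      calc Real.exp ((-(M + C)) / τ) = ∫ _, Real.exp ((-(M + C)) / τ) ∂ν := by
            simp
        _ ≤ F x := integral_mono_ae (integrable_const _)
            (hg_int x (Metric.mem_closedBall_self zero_le_one)) this
    exact lt_of_lt_of_le (Real.exp_pos _) hCx
  -- derivative of φ
  have hφd : HasFDerivAt φ ((-τ) • ((F x)⁻¹ • ∫ y, g' x y ∂ν)) x := by
    have h1 : HasFDerivAt (fun x' => Real.log (F x')) ((F x)⁻¹ • ∫ y, g' x y ∂ν) x :=
      hF.log (ne_of_gt hFx_pos)
    have h2 := h1.const_smul (-τ)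
    have hφeq : φ = fun x' => (-τ) • Real.log (F x') := by
      funext x'
      simpa [smul_eq_mul] using hφ x'
    rw [hφeq]
    exact h2
  -- identify derivative with gradient formula
  rw [hasGradientAt_iff_hasFDerivAt]
  refine hφd.congr_fderiv ?_
  symm
  -- remains: toDual (Fx⁻¹ • ∫ g • grad) = (-τ) • (Fx⁻¹ • ∫ g' x)
  have hgrad : ∀ y : Pt d, gradient (fun x' => c (x', y)) x
      = (InnerProductSpace.toDual ℝ (Pt d)).symm (L x y) :=
    fun y => ((hLd x y).hasGradientAt).gradient
  set I : Pt d →L[ℝ] ℝ := ∫ y, g x y • L x y ∂ν with hIdef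
  have hRHS : (∫ y, g' x y ∂ν) = (-τ⁻¹) • I := by
    rw [hIdef, ← integral_smul]
    congr 1
    funext y
    simp only [hg'def, smul_smul, neg_mul]
  have hLHS : (∫ y, g x y • gradient (fun x' => c (x', y)) x ∂ν)
      = (InnerProductSpace.toDual ℝ (Pt d)).symm I := by
    have h1 : ∀ y : Pt d, g x y • gradient (fun x' => c (x', y)) x
        = (InnerProductSpace.toDual ℝ (Pt d)).symm.toLinearIsometry (g x y • L x y) := by
      intro y
      rw [hgrad y]
      simp [_root_.map_smul]
    calc (∫ y, g x y • gradient (fun x' => c (x', y)) x ∂ν)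
        = ∫ y, (InnerProductSpace.toDual ℝ (Pt d)).symm.toLinearIsometry (g x y • L x y) ∂ν := by
          exact integral_congr_ae (Filter.Eventually.of_forall h1)
      _ = (InnerProductSpace.toDual ℝ (Pt d)).symm.toLinearIsometry I :=
          LinearIsometry.integral_comp_comm _ _
      _ = (InnerProductSpace.toDual ℝ (Pt d)).symm I := rfl
  rw [hLHS, hRHS, _root_.map_smul]
  rw [LinearIsometryEquiv.apply_symm_apply]
  rw [smul_smul, smul_smul]
  congr 1
  show (F x)⁻¹ = -τ * (F x)⁻¹ * -τ⁻¹
  field_simp
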